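/- arXiv:1909.10589 — 2 statements merged into one kernel-verified Lean document; each statement's English description precedes it below -/
import Mathlib

section
/- Let A, B ∈ M₂(ℂ), where A has distinct eigenvalues λ₁ ≠ λ₂ and B has distinct eigenvalues μ₁ ≠ μ₂. If (μ₁ − μ₂)/(λ₁ − λ₂) is a negative real number, then the swap pairing λ₁ ↦ μ₂, λ₂ ↦ μ₁ is a convex eigenpairing of A and B: there exists an eigenpath set {γ₁, γ₂} of the convex path α ↦ (1−α)A + αB with γ₁(0) = λ₁, γ₂(0) = λ₂, γ₁(1) = μ₂, and γ₂(1) = μ₁. -/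
open Polynomial Complex Set

noncomputable def csqrt (z : ℂ) : ℂ := z ^ ((1:ℂ)/2)


lemma csqrt_sq (z : ℂ) : csqrt z ^ 2 = z := by
  by_cases h : z = 0
  · simp [csqrt, h, Complex.zero_cpow (by norm_num : (1:ℂ)/2 ≠ 0)]
  · rw [csqrt, sq, ← Complex.cpow_add _ _ h]
    norm_num

lemma csqrt_ne_zero {z : ℂ} (h : z ≠ 0) : csqrt z ≠ 0 := by
  intro h0
  apply h
  rw [← csqrt_sq z, h0]; ring


lemma csqrt_eq_exp {z : ℂ} (h : z ≠ 0) : csqrt z = Complex.exp (Complex.log z * (((1:ℝ)/2 : ℝ) : ℂ)) := by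
  rw [csqrt, Complex.cpow_def_of_ne_zero h]
  norm_num

lemma half_log_im (z : ℂ) : (Complex.log z * (((1:ℝ)/2 : ℝ) : ℂ)).im = z.arg / 2 := by
  simp [Complex.mul_im, Complex.log_im]
  ring

lemma half_log_re (z : ℂ) : (Complex.log z * (((1:ℝ)/2 : ℝ) : ℂ)).re = Real.log ‖z‖ / 2 := by
  simp [Complex.mul_re, Complex.log_re]
  ring

lemma csqrt_re_pos {z : ℂ} (hz : z.im ≠ 0) : 0 < (csqrt z).re := by
  have h0 : z ≠ 0 := by intro h; rw [h] at hz; simp at hz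
  rw [csqrt_eq_exp h0, Complex.exp_re, half_log_im, half_log_re]
  have h1 : -Real.pi < z.arg := Complex.neg_pi_lt_arg z
  have h2 : z.arg ≠ Real.pi := by
    intro h; rw [Complex.arg_eq_pi_iff] at h; exact hz h.2
  have h3 : z.arg < Real.pi := lt_of_le_of_ne (Complex.arg_le_pi z) h2
  have : 0 < Real.cos (z.arg / 2) :=
    Real.cos_pos_of_mem_Ioo (Set.mem_Ioo.mpr ⟨by nlinarith, by nlinarith⟩)
  positivity

lemma csqrt_im_mul_pos {z : ℂ} (hz : z.im ≠ 0) : 0 < (csqrt z).im * z.im := by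
  have h0 : z ≠ 0 := by intro h; rw [h] at hz; simp at hz
  rw [csqrt_eq_exp h0, Complex.exp_im, half_log_im, half_log_re]
  have h1 : -Real.pi < z.arg := Complex.neg_pi_lt_arg z
  have h3 : z.arg ≤ Real.pi := Complex.arg_le_pi z
  have hs : Real.sin z.arg = z.im / ‖z‖ := Complex.sin_arg z
  have habs : 0 < ‖z‖ := norm_pos_iff.mpr h0
  have habs' : ‖z‖ ≠ 0 := ne_of_gt habs
  have he : 0 < Real.exp (Real.log ‖z‖/2) := Real.exp_pos _
  rcases lt_or_gt_of_ne hz with hneg | hpos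
  · have harg : z.arg < 0 := by
      by_contra h
      push_neg at h
      have h4 : 0 ≤ Real.sin z.arg := Real.sin_nonneg_of_nonneg_of_le_pi h h3
      rw [hs] at h4
      have h5 : 0 ≤ z.im := by
        have := mul_nonneg h4 habs.le
        rwa [div_mul_cancel₀ _ habs'] at this
      linarith
    have hsn : Real.sin (z.arg/2) < 0 := by
      apply Real.sin_neg_of_neg_of_neg_pi_lt <;> nlinarith
    nlinarith [mul_pos (mul_pos he (neg_pos.mpr hsn)) (neg_pos.mpr hneg)]
  · have harg : 0 < z.arg := by
      by_contra h
      push_neg at h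
      have h4 : Real.sin z.arg ≤ 0 := by
        rcases eq_or_lt_of_le h with h' | h'
        · rw [h']; simp
        · exact le_of_lt (Real.sin_neg_of_neg_of_neg_pi_lt h' h1)
      rw [hs] at h4
      have h5 : z.im ≤ 0 := by
        have := mul_nonpos_of_nonpos_of_nonneg h4 habs.le
        rwa [div_mul_cancel₀ _ habs'] at this
      linarith
    have hsp : 0 < Real.sin (z.arg/2) := by
      apply Real.sin_pos_of_pos_of_lt_pi <;> nlinarith
    nlinarith [mul_pos (mul_pos he hsp) hpos]

noncomputable def gre (σ : ℝ) (x : ℝ) (α : ℝ) : ℂ :=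
  (Real.sqrt (max (α - x) 0) : ℂ) + (σ : ℂ) * Complex.I * (Real.sqrt (max (x - α) 0) : ℂ)

lemma gre_continuous (σ x : ℝ) : Continuous (gre σ x) := by
  unfold gre
  fun_prop

lemma gre_sq {σ : ℝ} (hσ : σ = 1 ∨ σ = -1) (x : ℝ) (α : ℝ) :
    gre σ x α ^ 2 = (α : ℂ) - (x : ℂ) := by
  unfold gre
  rcases le_total α x with h | h
  · rw [max_eq_right (by linarith : α - x ≤ 0), max_eq_left (by linarith : (0:ℝ) ≤ x - α),
      Real.sqrt_zero]
    have h2c : ((Real.sqrt (x - α) : ℝ) : ℂ)^2 = (x : ℂ) - α := by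
      rw [← Complex.ofReal_pow, Real.sq_sqrt (by linarith : (0:ℝ) ≤ x - α)]
      push_cast; ring
    rcases hσ with h' | h' <;> subst h' <;> push_cast <;>
      linear_combination (((Real.sqrt (x - α) : ℝ) : ℂ))^2 * Complex.I_sq - h2c
  · rw [max_eq_left (by linarith : (0:ℝ) ≤ α - x), max_eq_right (by linarith : x - α ≤ 0),
      Real.sqrt_zero]
    have h1c : ((Real.sqrt (α - x) : ℝ) : ℂ)^2 = (α : ℂ) - x := by
      rw [← Complex.ofReal_pow, Real.sq_sqrt (by linarith : (0:ℝ) ≤ α - x)]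
      push_cast; ring
    push_cast
    linear_combination h1c

lemma csqrt_cont_nonreal {z : ℂ} (hz : z.im ≠ 0) :
    Continuous (fun α : ℝ => csqrt ((α : ℂ) - z)) := by
  unfold csqrt
  apply Continuous.cpow (Complex.continuous_ofReal.sub continuous_const) continuous_const
  intro α
  exact Or.inr (by simp [Complex.sub_im, hz])

lemma gadget (z : ℂ) (hz0 : z ≠ 0) (hz1 : z ≠ 1) :
    ∃ g g' : ℝ → ℂ, Continuous g ∧ Continuous g' ∧
      (∀ α : ℝ, g α ^ 2 = (α : ℂ) - z) ∧ (∀ α : ℝ, g' α ^ 2 = (α : ℂ) - z) ∧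
      ((g' 0 = -g 0 ∧ g' 1 = g 1) ∨
        (g' = g ∧ 0 < (g 1 * (starRingEnd ℂ) (g 0)).re)) := by
  by_cases him : z.im = 0
  · -- z is real
    set x := z.re with hx
    have hzx : z = (x : ℂ) := by
      apply Complex.ext <;> simp [him, hx]
    have hx0 : x ≠ 0 := fun h => hz0 (by rw [hzx, h]; simp)
    have hx1 : x ≠ 1 := fun h => hz1 (by rw [hzx, h]; simp)
    have e0 : ∀ σ : ℝ, 0 < x → gre σ x 0 = (σ:ℂ) * Complex.I * (Real.sqrt x : ℂ) := by
      intro σ hxpos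
      unfold gre
      rw [show (0:ℝ) - x = -x by ring, show x - (0:ℝ) = x by ring,
        max_eq_right (by linarith : -x ≤ 0), max_eq_left (by linarith : (0:ℝ) ≤ x),
        Real.sqrt_zero]
      push_cast; ring
    have e1 : ∀ σ : ℝ, x < 1 → gre σ x 1 = ((Real.sqrt (1 - x) : ℝ) : ℂ) := by
      intro σ hxlt
      unfold gre
      rw [max_eq_left (by linarith : (0:ℝ) ≤ 1 - x),
        max_eq_right (by linarith : x - 1 ≤ 0), Real.sqrt_zero]
      push_cast; ring
    rcases lt_trichotomy x 0 with hneg | hzero | hpos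
    · -- x < 0 : no flip, re positive
      refine ⟨gre 1 x, gre 1 x, gre_continuous 1 x, gre_continuous 1 x,
        fun α => by rw [gre_sq (Or.inl rfl) x α, hzx],
        fun α => by rw [gre_sq (Or.inl rfl) x α, hzx], Or.inr ⟨rfl, ?_⟩⟩
      have v0 : gre 1 x 0 = ((Real.sqrt (-x) : ℝ) : ℂ) := by
        unfold gre
        rw [show (0:ℝ) - x = -x by ring, show x - (0:ℝ) = x by ring,
          max_eq_left (by linarith : (0:ℝ) ≤ -x), max_eq_right (by linarith : x ≤ 0),
          Real.sqrt_zero]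
        push_cast; ring
      rw [v0, e1 1 (by linarith), Complex.conj_ofReal, ← Complex.ofReal_mul, Complex.ofReal_re]
      exact mul_pos (Real.sqrt_pos.mpr (by linarith)) (Real.sqrt_pos.mpr (by linarith))
    · exact absurd hzero hx0
    rcases lt_trichotomy x 1 with hlt | heq | hgt
    · -- 0 < x < 1 : flip available
      refine ⟨gre 1 x, gre (-1) x, gre_continuous 1 x, gre_continuous (-1) x,
        fun α => by rw [gre_sq (Or.inl rfl) x α, hzx],
        fun α => by rw [gre_sq (Or.inr rfl) x α, hzx], Or.inl ⟨?_, ?_⟩⟩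
      · rw [e0 1 hpos, e0 (-1) hpos]; push_cast; ring
      · rw [e1 1 hlt, e1 (-1) hlt]
    · exact absurd heq hx1
    · -- x > 1 : no flip, re positive
      refine ⟨gre 1 x, gre 1 x, gre_continuous 1 x, gre_continuous 1 x,
        fun α => by rw [gre_sq (Or.inl rfl) x α, hzx],
        fun α => by rw [gre_sq (Or.inl rfl) x α, hzx], Or.inr ⟨rfl, ?_⟩⟩
      have v1 : gre 1 x 1 = Complex.I * (Real.sqrt (x - 1) : ℂ) := by
        unfold gre
        rw [max_eq_right (by linarith : (1:ℝ) - x ≤ 0),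
          max_eq_left (by linarith : (0:ℝ) ≤ x - 1), Real.sqrt_zero]
        push_cast; ring
      have hprod : gre 1 x 1 * (starRingEnd ℂ) (gre 1 x 0)
          = ((Real.sqrt (x - 1) * Real.sqrt x : ℝ) : ℂ) := by
        rw [v1, e0 1 (by linarith)]
        simp only [map_mul, map_one, Complex.conj_I, Complex.conj_ofReal]
        push_cast
        linear_combination (-(Real.sqrt (x-1) : ℂ) * (Real.sqrt x : ℂ)) * Complex.I_sq
      rw [hprod, Complex.ofReal_re]
      exact mul_pos (Real.sqrt_pos.mpr (by linarith)) (Real.sqrt_pos.mpr (by linarith))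
  · -- z nonreal
    refine ⟨fun α => csqrt ((α : ℂ) - z), fun α => csqrt ((α : ℂ) - z),
      csqrt_cont_nonreal him, csqrt_cont_nonreal him,
      fun α => csqrt_sq _, fun α => csqrt_sq _, Or.inr ⟨rfl, ?_⟩⟩
    have hiu : ((1:ℂ) - z).im ≠ 0 := by simp [Complex.sub_im, him]
    have hiv : (-z).im ≠ 0 := by simp [Complex.neg_im, him]
    show 0 < (csqrt (((1:ℝ):ℂ) - z) * (starRingEnd ℂ) (csqrt (((0:ℝ):ℂ) - z))).re
    rw [show ((1:ℝ):ℂ) - z = (1:ℂ) - z by norm_num, show ((0:ℝ):ℂ) - z = -z by norm_num]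
    have r1 := csqrt_re_pos hiu
    have r2 := csqrt_re_pos hiv
    have i1 := csqrt_im_mul_pos hiu
    have i2 := csqrt_im_mul_pos hiv
    simp only [Complex.sub_im, Complex.one_im, Complex.neg_im, zero_sub] at i1 i2
    have him2 : 0 < z.im ^ 2 := by positivity
    have hii : 0 < (csqrt ((1:ℂ) - z)).im * (csqrt (-z)).im := by nlinarith
    simp only [Complex.mul_re, Complex.conj_re, Complex.conj_im]
    nlinarith

lemma no_neg_real_prod {w₁ w₂ : ℂ} (h₁ : 0 < w₁.re) (h₂ : 0 < w₂.re) {t : ℝ} (ht : t < 0) :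
    w₁ * w₂ ≠ (t : ℂ) := by
  intro h
  have hw₁ : w₁ ≠ 0 := fun h0 => by simp [h0] at h₁
  have hw₂ : w₂ = (t : ℂ) * w₁⁻¹ := by
    field_simp
    linear_combination h
  have hre : w₂.re = t * (w₁.re / Complex.normSq w₁) := by
    rw [hw₂, Complex.mul_re, Complex.ofReal_re, Complex.ofReal_im, Complex.inv_re]
    simp
  have hnsq : 0 < Complex.normSq w₁ := Complex.normSq_pos.mpr hw₁
  have : w₂.re < 0 := by
    rw [hre]
    have : 0 < w₁.re / Complex.normSq w₁ := div_pos h₁ hnsq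
    exact mul_neg_of_neg_of_pos ht this
  linarith

lemma fix_sign (F : ℝ → ℂ) {s : ℝ → ℂ} {d₀ d₁ : ℂ} (hc : Continuous s) (hd₀ : d₀ ≠ 0)
    (h0 : s 0 ^ 2 = d₀ ^ 2) (hp : s 1 * s 0 = -(d₁ * d₀)) (hsq : ∀ α, s α ^ 2 = F α) :
    ∃ t : ℝ → ℂ, Continuous t ∧ (∀ α, t α ^ 2 = F α) ∧ t 0 = d₀ ∧ t 1 = -d₁ := by
  have hcases : (s 0 - d₀) * (s 0 + d₀) = 0 := by linear_combination h0
  rcases mul_eq_zero.mp hcases with h | h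
  · have hs0d : s 0 = d₀ := by linear_combination h
    refine ⟨s, hc, hsq, hs0d, ?_⟩
    have h2 : s 1 * d₀ = -d₁ * d₀ := by linear_combination hp - s 1 * h
    exact mul_right_cancel₀ hd₀ h2
  · have hs0d : s 0 = -d₀ := by linear_combination h
    refine ⟨fun α => -(s α), hc.neg, fun α => by rw [← hsq α]; ring, by show -(s 0) = d₀; rw [hs0d]; ring, ?_⟩
    have h2 : s 1 * d₀ = d₁ * d₀ := by linear_combination -hp + s 1 * h
    have h4 : s 1 = d₁ := mul_right_cancel₀ hd₀ h2
    simp [h4]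

lemma key (a b c d₀ : ℂ) (r : ℝ) (hr : r < 0) (hd₀ : d₀ ≠ 0)
    (h0 : c = d₀ ^ 2) (h1 : a + b + c = ((r:ℂ) * d₀) ^ 2) :
    ∃ s : ℝ → ℂ, Continuous s ∧ (∀ α : ℝ, s α ^ 2 = a * (α:ℂ)^2 + b * (α:ℂ) + c) ∧
      s 0 = d₀ ∧ s 1 = -((r:ℂ) * d₀) := by
  have hr0 : (r:ℂ) ≠ 0 := by
    simp only [ne_eq, Complex.ofReal_eq_zero]
    exact ne_of_lt hr
  have hd₁ : (r:ℂ) * d₀ ≠ 0 := mul_ne_zero hr0 hd₀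
  have hc0 : c ≠ 0 := by rw [h0]; exact pow_ne_zero 2 hd₀
  by_cases ha : a = 0
  · subst ha
    by_cases hb : b = 0
    · subst hb
      have hr1 : (r:ℂ) = -1 := by
        have h2 : ((r:ℂ) - 1) * ((r:ℂ) + 1) * d₀^2 = 0 := by linear_combination h0 - h1
        rcases mul_eq_zero.mp h2 with h3 | h3
        · rcases mul_eq_zero.mp h3 with h4 | h4
          · exfalso
            have : (r:ℂ) = 1 := by linear_combination h4
            have : r = (1:ℝ) := by exact_mod_cast this
            linarith
          · linear_combination h4
        · exact absurd h3 (pow_ne_zero 2 hd₀)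
      refine ⟨fun _ => d₀, continuous_const, fun α => by rw [h0]; ring, rfl, ?_⟩
      rw [hr1]; ring
    · -- linear case
      set z := -c / b with hz
      have hbc : b + c ≠ 0 := by
        intro h
        apply pow_ne_zero 2 hd₁
        linear_combination h - h1
      have hz0 : z ≠ 0 := div_ne_zero (neg_ne_zero.mpr hc0) hb
      have hz1 : z ≠ 1 := by
        intro h
        apply hbc
        have h8 : b * z = -c := by rw [hz]; field_simp
        rw [h, mul_one] at h8
        linear_combination h8
      have hfz : ∀ α : ℝ, (0:ℂ) * (α:ℂ)^2 + b * (α:ℂ) + c = b * ((α:ℂ) - z) := by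
        intro α
        have h8 : b * z = -c := by rw [hz]; field_simp
        linear_combination h8
      obtain ⟨g, g', hgc, hg'c, hgsq, hg'sq, hdisj⟩ := gadget z hz0 hz1
      have hsb2 : csqrt b ^ 2 = b := csqrt_sq b
      set sb := csqrt b with hsb
      have sqS : ∀ α : ℝ, (sb * g α) ^ 2 = (0:ℂ) * (α:ℂ)^2 + b * (α:ℂ) + c := by
        intro α
        rw [hfz α, mul_pow, hsb2, hgsq α]
      have sqS' : ∀ α : ℝ, (sb * g' α) ^ 2 = (0:ℂ) * (α:ℂ)^2 + b * (α:ℂ) + c := by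
        intro α
        rw [hfz α, mul_pow, hsb2, hg'sq α]
      have hS0sq : (sb * g 0) ^ 2 = d₀ ^ 2 := by
        rw [sqS 0]; push_cast; linear_combination h0
      have hS1sq : (sb * g 1) ^ 2 = ((r:ℂ) * d₀) ^ 2 := by
        rw [sqS 1]; push_cast; linear_combination h1
      have hp2 : ((sb * g 1) * (sb * g 0))^2 = (((r:ℂ) * d₀) * d₀)^2 := by
        rw [mul_pow, hS0sq, hS1sq]; ring
      have hcases : ((sb * g 1) * (sb * g 0) - ((r:ℂ) * d₀) * d₀) *
          ((sb * g 1) * (sb * g 0) + ((r:ℂ) * d₀) * d₀) = 0 := by linear_combination hp2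
      rcases mul_eq_zero.mp hcases with hcase | hcase
      · -- product is +d₁d₀ : need a flip or contradiction
        have hpd : (sb * g 1) * (sb * g 0) = ((r:ℂ) * d₀) * d₀ := by linear_combination hcase
        rcases hdisj with ⟨hf0, hf1⟩ | ⟨hgg, hre⟩
        · -- flip available
          apply fix_sign _ (show Continuous fun α => sb * g' α from continuous_const.mul hg'c) hd₀ _ _ sqS'
          · rw [sqS' 0]; push_cast; linear_combination h0
          · rw [hf0, hf1]; linear_combination -hpd
        · -- no flip: contradiction
          exfalso
          have hs0ne : sb * g 0 ≠ 0 := by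
            intro h
            rw [h] at hS0sq
            exact pow_ne_zero 2 hd₀ (by linear_combination -hS0sq)
          have hs1rs0 : sb * g 1 = (r:ℂ) * (sb * g 0) := by
            have h5 : ((sb * g 1) - (r:ℂ) * (sb * g 0)) * (sb * g 0) = 0 := by
              linear_combination hpd - (r:ℂ) * hS0sq
            rcases mul_eq_zero.mp h5 with h6 | h6
            · linear_combination h6
            · exact absurd h6 hs0ne
          have e1 : (sb * g 1) * (starRingEnd ℂ) (sb * g 0)
              = (r:ℂ) * ((Complex.normSq (sb * g 0) : ℝ) : ℂ) := by
            rw [hs1rs0, mul_assoc, Complex.mul_conj]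
          have e2 : (sb * g 1) * (starRingEnd ℂ) (sb * g 0)
              = ((Complex.normSq sb : ℝ) : ℂ) * (g 1 * (starRingEnd ℂ) (g 0)) := by
            rw [map_mul, ← Complex.mul_conj]
            ring
          have hsbne : sb ≠ 0 := csqrt_ne_zero hb
          have hnsb : 0 < Complex.normSq sb := Complex.normSq_pos.mpr hsbne
          have hg0ne : g 0 ≠ 0 := fun h => hs0ne (by rw [h, mul_zero])
          have hns0 : 0 < Complex.normSq (g 0) := Complex.normSq_pos.mpr hg0ne
          set t : ℝ := r * Complex.normSq (g 0) with hT
          have ht : t < 0 := mul_neg_of_neg_of_pos hr hns0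
          have hwt : g 1 * (starRingEnd ℂ) (g 0) = (t : ℂ) := by
            have h7 : ((Complex.normSq sb : ℝ) : ℂ) * (g 1 * (starRingEnd ℂ) (g 0))
                = ((Complex.normSq sb : ℝ) : ℂ) * (t : ℂ) := by
              rw [← e2, e1, hT]
              push_cast [Complex.normSq_mul]
              ring
            exact mul_left_cancel₀ (by exact_mod_cast ne_of_gt hnsb) h7
          have := no_neg_real_prod hre (by norm_num : (0:ℝ) < (1:ℂ).re) ht
          apply this
          rw [mul_one, hwt]
      · -- product is -d₁d₀ : done
        apply fix_sign _ (show Continuous fun α => sb * g α from continuous_const.mul hgc) hd₀ _ _ sqS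
        · rw [sqS 0]; push_cast; linear_combination h0
        · linear_combination hcase
  · -- quadratic case
    have hw0 : csqrt (b^2 - 4*a*c) ^ 2 = b^2 - 4*a*c := csqrt_sq _
    set w0 := csqrt (b^2 - 4*a*c) with hw0d
    set z₁ := (-b + w0) / (2*a) with hz₁d
    set z₂ := (-b - w0) / (2*a) with hz₂d
    have hfz : ∀ α : ℝ, a * (α:ℂ)^2 + b * (α:ℂ) + c = a * ((α:ℂ) - z₁) * ((α:ℂ) - z₂) := by
      intro α
      rw [hz₁d, hz₂d]
      field_simp
      ring_nf
      linear_combination hw0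
    have hc' : c = a * (-z₁) * (-z₂) := by
      have h5 := hfz 0
      push_cast at h5
      linear_combination h5
    have hd' : ((r:ℂ) * d₀)^2 = a * (1 - z₁) * (1 - z₂) := by
      have h5 := hfz 1
      push_cast at h5
      linear_combination h5 - h1
    have hz₁0 : z₁ ≠ 0 := by
      intro h; rw [h] at hc'; simp at hc'; tauto
    have hz₂0 : z₂ ≠ 0 := by
      intro h; rw [h] at hc'; simp at hc'; tauto
    have hz₁1 : z₁ ≠ 1 := by
      intro h
      rw [h] at hd'
      simp at hd'
      rcases hd' with h' | h'
      · exact absurd h' (ne_of_lt hr)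
      · exact hd₀ h'
    have hz₂1 : z₂ ≠ 1 := by
      intro h
      rw [h] at hd'
      simp at hd'
      rcases hd' with h' | h'
      · exact absurd h' (ne_of_lt hr)
      · exact hd₀ h'
    obtain ⟨g₁, g₁', hg₁c, hg₁'c, hg₁sq, hg₁'sq, hdisj₁⟩ := gadget z₁ hz₁0 hz₁1
    obtain ⟨g₂, g₂', hg₂c, hg₂'c, hg₂sq, hg₂'sq, hdisj₂⟩ := gadget z₂ hz₂0 hz₂1
    have hsa2 : csqrt a ^ 2 = a := csqrt_sq a
    set sa := csqrt a with hsad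
    have sqS : ∀ α : ℝ, (sa * g₁ α * g₂ α) ^ 2 = a * (α:ℂ)^2 + b * (α:ℂ) + c := by
      intro α
      rw [hfz α, mul_pow, mul_pow, hsa2, hg₁sq α, hg₂sq α]
    have sqS1 : ∀ α : ℝ, (sa * g₁' α * g₂ α) ^ 2 = a * (α:ℂ)^2 + b * (α:ℂ) + c := by
      intro α
      rw [hfz α, mul_pow, mul_pow, hsa2, hg₁'sq α, hg₂sq α]
    have sqS2 : ∀ α : ℝ, (sa * g₁ α * g₂' α) ^ 2 = a * (α:ℂ)^2 + b * (α:ℂ) + c := by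
      intro α
      rw [hfz α, mul_pow, mul_pow, hsa2, hg₁sq α, hg₂'sq α]
    have hS0sq : (sa * g₁ 0 * g₂ 0) ^ 2 = d₀ ^ 2 := by
      rw [sqS 0]; push_cast; linear_combination h0
    have hS1sq : (sa * g₁ 1 * g₂ 1) ^ 2 = ((r:ℂ) * d₀) ^ 2 := by
      rw [sqS 1]; push_cast; linear_combination h1
    have hp2 : ((sa * g₁ 1 * g₂ 1) * (sa * g₁ 0 * g₂ 0))^2 = (((r:ℂ) * d₀) * d₀)^2 := by
      rw [mul_pow, hS0sq, hS1sq]; ring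
    have hcases : ((sa * g₁ 1 * g₂ 1) * (sa * g₁ 0 * g₂ 0) - ((r:ℂ) * d₀) * d₀) *
        ((sa * g₁ 1 * g₂ 1) * (sa * g₁ 0 * g₂ 0) + ((r:ℂ) * d₀) * d₀) = 0 := by
      linear_combination hp2
    rcases mul_eq_zero.mp hcases with hcase | hcase
    · have hpd : (sa * g₁ 1 * g₂ 1) * (sa * g₁ 0 * g₂ 0) = ((r:ℂ) * d₀) * d₀ := by
        linear_combination hcase
      rcases hdisj₁ with ⟨hf0, hf1⟩ | ⟨hgg₁, hre₁⟩
      · apply fix_sign _ (show Continuous fun α => sa * g₁' α * g₂ α from (continuous_const.mul hg₁'c).mul hg₂c) hd₀ _ _ sqS1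
        · rw [sqS1 0]; push_cast; linear_combination h0
        · rw [hf0, hf1]; linear_combination -hpd
      · rcases hdisj₂ with ⟨hf0, hf1⟩ | ⟨hgg₂, hre₂⟩
        · apply fix_sign _ (show Continuous fun α => sa * g₁ α * g₂' α from (continuous_const.mul hg₁c).mul hg₂'c) hd₀ _ _ sqS2
          · rw [sqS2 0]; push_cast; linear_combination h0
          · rw [hf0, hf1]; linear_combination -hpd
        · exfalso
          have hs0ne : sa * g₁ 0 * g₂ 0 ≠ 0 := by
            intro h
            rw [h] at hS0sq
            exact pow_ne_zero 2 hd₀ (by linear_combination -hS0sq)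
          have hs1rs0 : sa * g₁ 1 * g₂ 1 = (r:ℂ) * (sa * g₁ 0 * g₂ 0) := by
            have h5 : ((sa * g₁ 1 * g₂ 1) - (r:ℂ) * (sa * g₁ 0 * g₂ 0)) * (sa * g₁ 0 * g₂ 0) = 0 := by
              linear_combination hpd - (r:ℂ) * hS0sq
            rcases mul_eq_zero.mp h5 with h6 | h6
            · linear_combination h6
            · exact absurd h6 hs0ne
          have e1 : (sa * g₁ 1 * g₂ 1) * (starRingEnd ℂ) (sa * g₁ 0 * g₂ 0)
              = (r:ℂ) * ((Complex.normSq (sa * g₁ 0 * g₂ 0) : ℝ) : ℂ) := by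
            rw [hs1rs0, mul_assoc, Complex.mul_conj]
          have e2 : (sa * g₁ 1 * g₂ 1) * (starRingEnd ℂ) (sa * g₁ 0 * g₂ 0)
              = ((Complex.normSq sa : ℝ) : ℂ) * ((g₁ 1 * (starRingEnd ℂ) (g₁ 0)) *
                (g₂ 1 * (starRingEnd ℂ) (g₂ 0))) := by
            rw [map_mul, map_mul, ← Complex.mul_conj]
            ring
          have hsane : sa ≠ 0 := csqrt_ne_zero ha
          have hnsa : 0 < Complex.normSq sa := Complex.normSq_pos.mpr hsane
          have hg₁0ne : g₁ 0 ≠ 0 := by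
            intro h; exact hs0ne (by rw [h, mul_zero, zero_mul])
          have hg₂0ne : g₂ 0 ≠ 0 := by
            intro h; exact hs0ne (by rw [h, mul_zero])
          have hn₁ : 0 < Complex.normSq (g₁ 0) := Complex.normSq_pos.mpr hg₁0ne
          have hn₂ : 0 < Complex.normSq (g₂ 0) := Complex.normSq_pos.mpr hg₂0ne
          set t : ℝ := r * (Complex.normSq (g₁ 0) * Complex.normSq (g₂ 0)) with hT
          have ht : t < 0 := mul_neg_of_neg_of_pos hr (mul_pos hn₁ hn₂)
          have hwt : (g₁ 1 * (starRingEnd ℂ) (g₁ 0)) * (g₂ 1 * (starRingEnd ℂ) (g₂ 0))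
              = (t : ℂ) := by
            have h7 : ((Complex.normSq sa : ℝ) : ℂ) * ((g₁ 1 * (starRingEnd ℂ) (g₁ 0)) *
                (g₂ 1 * (starRingEnd ℂ) (g₂ 0)))
                = ((Complex.normSq sa : ℝ) : ℂ) * (t : ℂ) := by
              rw [← e2, e1, hT]
              push_cast [Complex.normSq_mul]
              ring
            exact mul_left_cancel₀ (by exact_mod_cast ne_of_gt hnsa) h7
          exact absurd hwt (no_neg_real_prod hre₁ hre₂ ht)
    · apply fix_sign _ (show Continuous fun α => sa * g₁ α * g₂ α from (continuous_const.mul hg₁c).mul hg₂c) hd₀ _ _ sqS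
      · rw [sqS 0]; push_cast; linear_combination h0
      · linear_combination hcase

def IsEigenpathSet (n : ℕ) (C : ℝ → Matrix (Fin n) (Fin n) ℂ) (γ : Fin n → ℝ → ℂ) : Prop :=
  (∀ j, ContinuousOn (γ j) (Set.Icc 0 1)) ∧
  ∀ α ∈ Set.Icc (0 : ℝ) 1,
    (Finset.univ.val.map fun j => γ j α) = (Matrix.charpoly (C α)).roots

lemma charpoly_fin_two' (M : Matrix (Fin 2) (Fin 2) ℂ) :
    M.charpoly = X^2 - C (M 0 0 + M 1 1) * X + C (M 0 0 * M 1 1 - M 0 1 * M 1 0) := by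
  rw [Matrix.charpoly, Matrix.det_fin_two]
  rw [Matrix.charmatrix_apply_eq, Matrix.charmatrix_apply_eq,
    Matrix.charmatrix_apply_ne _ _ _ (by decide), Matrix.charmatrix_apply_ne _ _ _ (by decide)]
  simp only [map_add, map_mul, map_sub]
  ring

lemma roots_quad (u v : ℂ) : (X^2 - C (u+v) * X + C (u*v)).roots = {u, v} := by
  have h : X^2 - C (u+v) * X + C (u*v) = (X - C u) * (X - C v) := by
    simp only [map_add, map_mul]
    ring
  rw [h, Polynomial.roots_mul (mul_ne_zero (Polynomial.X_sub_C_ne_zero u)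
    (Polynomial.X_sub_C_ne_zero v)), Polynomial.roots_X_sub_C, Polynomial.roots_X_sub_C]
  rfl

lemma trace_det_of_roots {M : Matrix (Fin 2) (Fin 2) ℂ} {u v : ℂ}
    (h : (Matrix.charpoly M).roots = {u, v}) (huv : u ≠ v) :
    M 0 0 + M 1 1 = u + v ∧ M 0 0 * M 1 1 - M 0 1 * M 1 0 = u * v := by
  set t := M 0 0 + M 1 1
  set d := M 0 0 * M 1 1 - M 0 1 * M 1 0
  have hu : u ∈ (Matrix.charpoly M).roots := by rw [h]; simp
  have hv : v ∈ (Matrix.charpoly M).roots := by rw [h]; simp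
  have eu : u^2 - t * u + d = 0 := by
    have := Polynomial.isRoot_of_mem_roots hu
    rw [charpoly_fin_two' M] at this
    simpa [Polynomial.IsRoot] using this
  have ev : v^2 - t * v + d = 0 := by
    have := Polynomial.isRoot_of_mem_roots hv
    rw [charpoly_fin_two' M] at this
    simpa [Polynomial.IsRoot] using this
  have hfac : (u - v) * ((u + v) - t) = 0 := by linear_combination eu - ev
  have ht : t = u + v := by
    rcases mul_eq_zero.mp hfac with h' | h'
    · exact absurd h' (sub_ne_zero.mpr huv)
    · linear_combination -h'
  refine ⟨ht, ?_⟩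
  linear_combination eu + u * ht

theorem swap_pairing_of_neg_real_ratio
    (A B : Matrix (Fin 2) (Fin 2) ℂ) (lam₁ lam₂ mu₁ mu₂ : ℂ)
    (hA : (Matrix.charpoly A).roots = {lam₁, lam₂}) (hlam : lam₁ ≠ lam₂)
    (hB : (Matrix.charpoly B).roots = {mu₁, mu₂}) (hmu : mu₁ ≠ mu₂)
    (hratio : ∃ r : ℝ, r < 0 ∧ (mu₁ - mu₂) / (lam₁ - lam₂) = (r : ℂ)) :
    ∃ γ : Fin 2 → ℝ → ℂ,
      IsEigenpathSet 2 (fun α => ((1 - α : ℝ) : ℂ) • A + (α : ℂ) • B) γ ∧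
      γ 0 0 = lam₁ ∧ γ 1 0 = lam₂ ∧ γ 0 1 = mu₂ ∧ γ 1 1 = mu₁ := by
  obtain ⟨r, hr, hrq⟩ := hratio
  obtain ⟨htA, hdA⟩ := trace_det_of_roots hA hlam
  obtain ⟨htB, hdB⟩ := trace_det_of_roots hB hmu
  set d₀ : ℂ := lam₁ - lam₂ with hd₀d
  have hd₀ : d₀ ≠ 0 := sub_ne_zero.mpr hlam
  have hmu' : mu₁ - mu₂ = (r : ℂ) * d₀ := by
    rw [div_eq_iff hd₀] at hrq
    exact hrq
  -- the coefficients of the discriminant quadratic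
  set tA : ℂ := A 0 0 + A 1 1 with htAd
  set tB : ℂ := B 0 0 + B 1 1 with htBd
  set dA : ℂ := A 0 0 * A 1 1 - A 0 1 * A 1 0 with hdAd
  set dB : ℂ := B 0 0 * B 1 1 - B 0 1 * B 1 0 with hdBd
  set m : ℂ := A 0 0 * B 1 1 + B 0 0 * A 1 1 - A 0 1 * B 1 0 - B 0 1 * A 1 0 with hmd
  set c0 : ℂ := tA^2 - 4*dA with hc0d
  set c1 : ℂ := tA*tB - 2*m with hc1d
  set c2 : ℂ := tB^2 - 4*dB with hc2d
  have h0 : c0 = d₀ ^ 2 := by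
    rw [hc0d, htA, hdA, hd₀d]; ring
  have h1 : (c0 - 2*c1 + c2) + (2*c1 - 2*c0) + c0 = ((r:ℂ) * d₀) ^ 2 := by
    rw [← hmu']
    rw [hc2d, htB, hdB]; ring
  obtain ⟨s, hsc, hssq, hs0, hs1⟩ :=
    key (c0 - 2*c1 + c2) (2*c1 - 2*c0) c0 d₀ r hr hd₀ h0 h1
  -- trace path
  set τ : ℝ → ℂ := fun α => ((1 - α : ℝ) : ℂ) * tA + ((α : ℝ) : ℂ) * tB with hτd
  have hτc : Continuous τ := by
    rw [hτd]; fun_prop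
  set γ₀ : ℝ → ℂ := fun α => (τ α + s α) / 2 with hγ₀d
  set γ₁ : ℝ → ℂ := fun α => (τ α - s α) / 2 with hγ₁d
  refine ⟨![γ₀, γ₁], ⟨?_, ?_⟩, ?_, ?_, ?_, ?_⟩
  · intro j
    fin_cases j
    · exact (((hτc.add hsc).div_const 2)).continuousOn
    · exact (((hτc.sub hsc).div_const 2)).continuousOn
  · intro α _
    have huniv : (Finset.univ.val.map fun j => ![γ₀, γ₁] j α) = {γ₀ α, γ₁ α} := rfl
    rw [huniv]
    set M := ((1 - α : ℝ) : ℂ) • A + ((α : ℝ) : ℂ) • B with hM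
    have hMe : ∀ i j, M i j = ((1 - α : ℝ) : ℂ) * A i j + ((α : ℝ) : ℂ) * B i j := by
      intro i j
      rw [hM]
      simp [Matrix.add_apply, Matrix.smul_apply, smul_eq_mul]
    have hsum : γ₀ α + γ₁ α = M 0 0 + M 1 1 := by
      rw [hγ₀d, hγ₁d, hMe, hMe, hτd]
      push_cast
      ring
    have hprod : γ₀ α * γ₁ α = M 0 0 * M 1 1 - M 0 1 * M 1 0 := by
      have hsq := hssq α
      have hkey : (τ α ^ 2 - s α ^ 2) / 4 = M 0 0 * M 1 1 - M 0 1 * M 1 0 := by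
        rw [hsq]
        simp only [hMe, hτd]
        rw [hc0d, hc1d, hc2d, htAd, htBd, hdAd, hdBd, hmd]
        push_cast
        ring
      rw [hγ₀d, hγ₁d, ← hkey]
      ring
    rw [charpoly_fin_two' M, ← hsum, ← hprod, roots_quad]
  · show (τ 0 + s 0) / 2 = lam₁
    have hτ0 : τ 0 = tA := by simp only [hτd]; push_cast; ring
    rw [hτ0, hs0, htA, hd₀d]
    ring
  · show (τ 0 - s 0) / 2 = lam₂
    have hτ0 : τ 0 = tA := by simp only [hτd]; push_cast; ring
    rw [hτ0, hs0, htA, hd₀d]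
    ring
  · show (τ 1 + s 1) / 2 = mu₂
    have hτ1 : τ 1 = tB := by simp only [hτd]; push_cast; ring
    rw [hτ1, hs1, htB]
    linear_combination hmu' / 2
  · show (τ 1 - s 1) / 2 = mu₁
    have hτ1 : τ 1 = tB := by simp only [hτd]; push_cast; ring
    rw [hτ1, hs1, htB]
    linear_combination -hmu' / 2
end

section
/- Let n ≥ 1 and let C : [0,1] → M_n(ℂ) be a matrix path such that each entry function α ↦ (C_α)_{ij} is real-analytic on an open neighborhood of [0,1] in ℝ. Then the set of singular ambiguities of the C-eigenregion E_C is finite. -/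
open Polynomial Set

section helpers

variable {U : Set ℝ}

lemma analyticOnNhd_det {m : ℕ} (f : ℝ → Matrix (Fin m) (Fin m) ℂ)
    (hf : ∀ i j, AnalyticOnNhd ℝ (fun α => f α i j) U) :
    AnalyticOnNhd ℝ (fun α => (f α).det) U := by
  have : (fun α => (f α).det)
      = fun α => ∑ σ : Equiv.Perm (Fin m), (Equiv.Perm.sign σ : ℂ) * ∏ i, f α (σ i) i := by
    funext α; rw [Matrix.det_apply']
  rw [this]
  apply Finset.analyticOnNhd_fun_sum
  intro σ _
  exact analyticOnNhd_const.mul (Finset.analyticOnNhd_fun_prod _ fun i _ => hf (σ i) i)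

lemma analyticOnNhd_aeval {m : ℕ} (F : MvPolynomial (Fin m) ℂ) (g : Fin m → ℝ → ℂ)
    (hg : ∀ i, AnalyticOnNhd ℝ (g i) U) :
    AnalyticOnNhd ℝ (fun α => MvPolynomial.aeval (fun i => g i α) F) U := by
  induction F using MvPolynomial.induction_on with
  | C r => simpa using analyticOnNhd_const (v := (algebraMap ℂ ℂ) r)
  | add p q hp hq => simpa [map_add, Pi.add_def] using hp.add hq
  | mul_X p i hp => simpa [map_mul] using hp.mul (hg i)

lemma norm_root_le_of_monic {p : ℂ[X]} (hm : p.Monic) (hd : 1 ≤ p.natDegree) {z : ℂ}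
    (hz : p.IsRoot z) :
    ‖z‖ ≤ 1 + ∑ i ∈ Finset.range p.natDegree, ‖p.coeff i‖ := by
  set d := p.natDegree with hdd
  set S := ∑ i ∈ Finset.range d, ‖p.coeff i‖ with hS
  have hS0 : 0 ≤ S := Finset.sum_nonneg fun i _ => norm_nonneg _
  rcases le_or_gt ‖z‖ 1 with h1 | h1
  · linarith
  · have heval : (0:ℂ) = ∑ i ∈ Finset.range (d + 1), p.coeff i * z ^ i := by
      rw [← Polynomial.eval_eq_sum_range]; exact hz.symm
    rw [Finset.sum_range_succ, hm.coeff_natDegree, one_mul] at heval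
    have hzd : z ^ d = -∑ i ∈ Finset.range d, p.coeff i * z ^ i := by
      rw [eq_neg_iff_add_eq_zero]
      rw [add_comm]; exact heval.symm
    have hnorm : ‖z‖ ^ d ≤ S * ‖z‖ ^ (d - 1) := by
      calc ‖z‖ ^ d = ‖z ^ d‖ := (norm_pow _ _).symm
        _ = ‖∑ i ∈ Finset.range d, p.coeff i * z ^ i‖ := by rw [hzd, norm_neg]
        _ ≤ ∑ i ∈ Finset.range d, ‖p.coeff i * z ^ i‖ := norm_sum_le _ _
        _ ≤ ∑ i ∈ Finset.range d, ‖p.coeff i‖ * ‖z‖ ^ (d - 1) := by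
            apply Finset.sum_le_sum
            intro i hi
            rw [norm_mul, norm_pow]
            apply mul_le_mul_of_nonneg_left _ (norm_nonneg _)
            apply pow_le_pow_right₀ h1.le
            have := Finset.mem_range.mp hi
            omega
        _ = S * ‖z‖ ^ (d - 1) := by rw [← Finset.sum_mul]
    have hd1 : d = (d - 1) + 1 := by omega
    rw [hd1, pow_succ, mul_comm (‖z‖ ^ (d-1))] at hnorm
    have hpos : (0:ℝ) < ‖z‖ ^ (d - 1) := pow_pos (by linarith) _
    have := (mul_le_mul_iff_left₀ hpos).mp hnorm
    linarith

lemma exists_tuple {n : ℕ} (s : Multiset ℂ) (hn : Multiset.card s = n) :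
    ∃ r : Fin n → ℂ, Multiset.map r Finset.univ.val = s := by
  obtain ⟨l, rfl⟩ := Quot.exists_rep s
  have hl : l.length = n := by simpa using hn
  subst hl
  refine ⟨l.get, ?_⟩
  have huniv : (Finset.univ.val : Multiset (Fin l.length)) = ↑(List.finRange l.length) := rfl
  rw [huniv]
  show ((List.finRange l.length).map l.get : Multiset ℂ) = (l : Multiset ℂ)
  rw [← List.ofFn_eq_map, List.ofFn_get]

end helpers


open Polynomial Set Matrix

noncomputable def powSum (s : Multiset ℂ) (j : ℕ) : ℂ := (s.map (· ^ j)).sum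

lemma powSum_eq (s : Multiset ℂ) (j : ℕ) :
    powSum s j = ∑ w ∈ s.toFinset, (s.count w : ℂ) * w ^ j := by
  rw [powSum, Finset.sum_multiset_map_count]
  exact Finset.sum_congr rfl fun w _ => by rw [nsmul_eq_mul]

/-- The `k × k` "Hermite" matrix of power sums of a multiset. -/
noncomputable def hermMat (k : ℕ) (s : Multiset ℂ) : Matrix (Fin k) (Fin k) ℂ :=
  Matrix.of fun a b : Fin k => powSum s ((a : ℕ) + (b : ℕ))

lemma herm_det_eq_zero {k : ℕ} (s : Multiset ℂ) (hlt : s.toFinset.card < k) :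
    (hermMat k s).det = 0 := by
  classical
  set t := s.toFinset with ht
  set N := t.card with hN
  set e : Fin N → t := fun i => t.equivFin.symm i with he
  set μ : Fin N → ℂ := fun i => (e i : ℂ) with hμ
  set m : Fin N → ℂ := fun i => (s.count (μ i) : ℂ) with hm
  have hps : ∀ j : ℕ, powSum s j = ∑ i : Fin N, m i * μ i ^ j := by
    intro j
    rw [powSum_eq]
    rw [← Finset.sum_coe_sort t (fun w => (s.count w : ℂ) * w ^ j)]
    exact (Equiv.sum_comp t.equivFin.symm (fun x : t => (s.count (x:ℂ) : ℂ) * (x:ℂ) ^ j)).symm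
  set A : Matrix (Fin k) (Fin k) ℂ :=
    Matrix.of (fun a j : Fin k =>
      if h : (j : ℕ) < N then m ⟨j, h⟩ * μ ⟨j, h⟩ ^ (a : ℕ) else 0) with hA
  set B : Matrix (Fin k) (Fin k) ℂ :=
    Matrix.of (fun j b : Fin k =>
      if h : (j : ℕ) < N then μ ⟨j, h⟩ ^ (b : ℕ) else 0) with hB
  have hM : hermMat k s = A * B := by
    ext a b
    rw [Matrix.mul_apply, hermMat, Matrix.of_apply, hps]
    have step1 : ∑ i : Fin N, m i * μ i ^ ((a : ℕ) + (b : ℕ))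
        = ∑ i ∈ Finset.range N, (fun i : ℕ =>
            if h : i < N then m ⟨i, h⟩ * μ ⟨i, h⟩ ^ ((a : ℕ) + (b : ℕ)) else 0) i := by
      rw [← Fin.sum_univ_eq_sum_range]
      exact Finset.sum_congr rfl fun i _ => by simp [i.2]
    rw [step1]
    rw [Finset.sum_subset (Finset.range_subset_range.mpr hlt.le) (by
      intro x _ hx
      have : ¬ x < N := by simpa using hx
      simp [this])]
    rw [← Fin.sum_univ_eq_sum_range (fun i : ℕ =>
      if h : i < N then m ⟨i, h⟩ * μ ⟨i, h⟩ ^ ((a : ℕ) + (b : ℕ)) else 0) k]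
    refine Finset.sum_congr rfl fun j _ => ?_
    by_cases h : (j : ℕ) < N
    · simp only [hA, hB, Matrix.of_apply, dif_pos h]
      rw [pow_add]; ring
    · simp only [hA, hB, Matrix.of_apply, dif_neg h, zero_mul]
  have hdetA : A.det = 0 := by
    apply Matrix.det_eq_zero_of_column_eq_zero ⟨N, hlt⟩
    intro i
    simp [hA]
  rw [hM, Matrix.det_mul, hdetA, zero_mul]

lemma herm_det_ne_zero {k : ℕ} (s : Multiset ℂ) (heq : s.toFinset.card = k) :
    (hermMat k s).det ≠ 0 := by
  classical
  set t := s.toFinset with ht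
  set E : Fin k ≃ t := (finCongr heq.symm).trans t.equivFin.symm with hE
  set μ : Fin k → ℂ := fun i => (E i : ℂ) with hμ
  have hμinj : Function.Injective μ := fun i j hij => by
    apply E.injective; exact Subtype.ext hij
  set m : Fin k → ℂ := fun i => (s.count (μ i) : ℂ) with hm
  have hm0 : ∀ i, m i ≠ 0 := by
    intro i
    have hmem : μ i ∈ s := Multiset.mem_toFinset.mp (E i).2
    exact Nat.cast_ne_zero.mpr (Multiset.count_ne_zero.mpr hmem)
  have hps : ∀ j : ℕ, powSum s j = ∑ i : Fin k, m i * μ i ^ j := by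
    intro j
    rw [powSum_eq]
    rw [← Finset.sum_coe_sort t (fun w => (s.count w : ℂ) * w ^ j)]
    exact (Equiv.sum_comp E (fun x : t => (s.count (x:ℂ) : ℂ) * (x:ℂ) ^ j)).symm
  set A : Matrix (Fin k) (Fin k) ℂ :=
    Matrix.of (fun a i : Fin k => m i * μ i ^ (a : ℕ)) with hA
  have hM : hermMat k s = A * Matrix.vandermonde μ := by
    ext a b
    rw [Matrix.mul_apply, hermMat, Matrix.of_apply, hps]
    refine Finset.sum_congr rfl fun i _ => ?_
    simp only [hA, Matrix.of_apply, Matrix.vandermonde]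
    rw [pow_add]; ring
  have hvdm : (Matrix.vandermonde μ).det ≠ 0 := by
    rw [Matrix.det_vandermonde]
    apply Finset.prod_ne_zero_iff.mpr
    intro i _
    apply Finset.prod_ne_zero_iff.mpr
    intro j hj
    have : i ≠ j := fun h => by subst h; exact absurd (Finset.mem_Ioi.mp hj) (lt_irrefl _)
    exact sub_ne_zero.mpr fun hc => this (hμinj hc).symm
  have hdetA : A.det ≠ 0 := by
    have : A = Matrix.of (fun a i : Fin k => m i * (Matrix.vandermonde μ)ᵀ a i) := by
      ext a i; simp [hA, Matrix.vandermonde]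
    rw [this, Matrix.det_mul_row, Matrix.det_transpose]
    exact mul_ne_zero (Finset.prod_ne_zero_iff.mpr fun i _ => hm0 i) hvdm
  rw [hM, Matrix.det_mul]
  exact mul_ne_zero hdetA hvdm

section charpoly

variable {n : ℕ} {U : Set ℝ}

lemma charpoly_natdeg (A : Matrix (Fin n) (Fin n) ℂ) : (Matrix.charpoly A).natDegree = n := by
  simpa using A.charpoly_natDegree_eq_dim

lemma roots_card_eq (A : Matrix (Fin n) (Fin n) ℂ) :
    Multiset.card (Matrix.charpoly A).roots = n := by
  have h := Polynomial.splits_iff_card_roots.mp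
    (IsAlgClosed.splits (Matrix.charpoly A))
  rwa [charpoly_natdeg] at h

lemma analyticOnNhd_eval_charpoly (C : ℝ → Matrix (Fin n) (Fin n) ℂ)
    (hA : ∀ i j, AnalyticOnNhd ℝ (fun α => C α i j) U) (x : ℂ) :
    AnalyticOnNhd ℝ (fun α => (Matrix.charpoly (C α)).eval x) U := by
  have key : ∀ α, (Matrix.charpoly (C α)).eval x
      = Matrix.det (Matrix.of fun i j => (if i = j then x else 0) - C α i j) := by
    intro α
    rw [Matrix.charpoly]
    have h := RingHom.map_det (Polynomial.evalRingHom x) (Matrix.charmatrix (C α))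
    have h' : Polynomial.eval x (Matrix.charmatrix (C α)).det
        = ((Matrix.charmatrix (C α)).map (Polynomial.evalRingHom x)).det := h
    rw [h']
    congr 1
    ext i j
    by_cases hij : i = j
    · subst hij
      simp
    · simp [Matrix.charmatrix_apply_ne _ _ _ hij, hij]
  rw [show (fun α => (Matrix.charpoly (C α)).eval x) = _ from funext key]
  exact analyticOnNhd_det _ fun i j => analyticOnNhd_const.sub (hA i j)

lemma analyticOnNhd_coeff (C : ℝ → Matrix (Fin n) (Fin n) ℂ)
    (hA : ∀ i j, AnalyticOnNhd ℝ (fun α => C α i j) U) (k : ℕ) :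
    AnalyticOnNhd ℝ (fun α => (Matrix.charpoly (C α)).coeff k) U := by
  classical
  set v : Fin (n + 1) → ℂ := fun j => ((j : ℕ) : ℂ) with hv
  have hinj : Set.InjOn v (Finset.univ : Finset (Fin (n + 1))) := by
    intro a _ b _ h
    exact Fin.ext (Nat.cast_injective h)
  have hrep : ∀ α, Matrix.charpoly (C α)
      = ∑ j : Fin (n + 1), Polynomial.C ((Matrix.charpoly (C α)).eval (v j))
          * Lagrange.basis Finset.univ v j := by
    intro α
    have hdeg : (Matrix.charpoly (C α)).degree
        < ((Finset.univ : Finset (Fin (n + 1))).card : ℕ) := by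
      refine lt_of_le_of_lt Polynomial.degree_le_natDegree ?_
      rw [charpoly_natdeg]
      simp only [Finset.card_univ, Fintype.card_fin]
      exact_mod_cast Nat.lt_succ_self n
    have h := Lagrange.eq_interpolate hinj hdeg
    rw [Lagrange.interpolate_apply] at h
    exact h
  have : (fun α => (Matrix.charpoly (C α)).coeff k)
      = fun α => ∑ j : Fin (n + 1),
          (Matrix.charpoly (C α)).eval (v j) * (Lagrange.basis Finset.univ v j).coeff k := by
    funext α
    conv_lhs => rw [hrep α]
    rw [Polynomial.finset_sum_coeff]
    exact Finset.sum_congr rfl fun j _ => Polynomial.coeff_C_mul _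
  rw [this]
  exact Finset.analyticOnNhd_fun_sum _ fun j _ =>
    (analyticOnNhd_eval_charpoly C hA (v j)).mul analyticOnNhd_const

lemma analyticOnNhd_powSum (C : ℝ → Matrix (Fin n) (Fin n) ℂ)
    (hA : ∀ i j, AnalyticOnNhd ℝ (fun α => C α i j) U) (j : ℕ) :
    AnalyticOnNhd ℝ (fun α => powSum (Matrix.charpoly (C α)).roots j) U := by
  classical
  obtain ⟨F, hF⟩ := MvPolynomial.esymmAlgHom_surjective (σ := Fin n) (R := ℂ) (n := n)
    (by simp) ⟨MvPolynomial.psum (Fin n) ℂ j, MvPolynomial.psum_isSymmetric _ _ j⟩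
  have hFval : MvPolynomial.aeval (fun i : Fin n => MvPolynomial.esymm (Fin n) ℂ ((i : ℕ) + 1)) F
      = MvPolynomial.psum (Fin n) ℂ j := by
    have h := congrArg Subtype.val hF
    rwa [MvPolynomial.esymmAlgHom_apply] at h
  set g : Fin n → ℝ → ℂ := fun i α =>
    (-1 : ℂ) ^ ((i : ℕ) + 1) * (Matrix.charpoly (C α)).coeff (n - ((i : ℕ) + 1)) with hg
  have hganal : ∀ i, AnalyticOnNhd ℝ (g i) U := fun i =>
    analyticOnNhd_const.mul (analyticOnNhd_coeff C hA _)
  have key : ∀ α, powSum (Matrix.charpoly (C α)).roots j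
      = MvPolynomial.aeval (fun i => g i α) F := by
    intro α
    obtain ⟨r, hr⟩ := exists_tuple (Matrix.charpoly (C α)).roots (roots_card_eq (C α))
    have h1 : ∀ i : Fin n,
        MvPolynomial.aeval r (MvPolynomial.esymm (Fin n) ℂ ((i : ℕ) + 1)) = g i α := by
      intro i
      rw [MvPolynomial.aeval_esymm_eq_multiset_esymm, hr]
      have hcard : Multiset.card (Matrix.charpoly (C α)).roots
          = (Matrix.charpoly (C α)).natDegree := by
        rw [roots_card_eq, charpoly_natdeg]
      have hle : n - ((i : ℕ) + 1) ≤ (Matrix.charpoly (C α)).natDegree := by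
        rw [charpoly_natdeg]; omega
      have hvieta := Polynomial.coeff_eq_esymm_roots_of_card hcard hle
      have hi1 : (i : ℕ) + 1 ≤ n := i.2
      have hnd : (Matrix.charpoly (C α)).natDegree - (n - ((i : ℕ) + 1)) = (i : ℕ) + 1 := by
        rw [charpoly_natdeg]; omega
      rw [hnd, (Matrix.charpoly_monic (C α)).leadingCoeff, one_mul] at hvieta
      rw [hg]
      simp only []
      rw [hvieta, ← mul_assoc, ← pow_add]
      have : (-1 : ℂ) ^ (((i : ℕ) + 1) + ((i : ℕ) + 1)) = 1 := by
        rw [← two_mul, pow_mul]; simp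
      rw [this, one_mul]
    calc powSum (Matrix.charpoly (C α)).roots j
        = MvPolynomial.aeval r (MvPolynomial.psum (Fin n) ℂ j) := by
          rw [MvPolynomial.psum, map_sum]
          simp only [map_pow, MvPolynomial.aeval_X]
          rw [powSum, ← hr, Multiset.map_map]
          rfl
      _ = MvPolynomial.aeval r (MvPolynomial.aeval
            (fun i : Fin n => MvPolynomial.esymm (Fin n) ℂ ((i : ℕ) + 1)) F) := by rw [hFval]
      _ = MvPolynomial.aeval (fun i : Fin n =>
            MvPolynomial.aeval r (MvPolynomial.esymm (Fin n) ℂ ((i : ℕ) + 1))) F :=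
          MvPolynomial.comp_aeval_apply (MvPolynomial.aeval r) F
            (f := fun i : Fin n => MvPolynomial.esymm (Fin n) ℂ ((i : ℕ) + 1))
      _ = MvPolynomial.aeval (fun i => g i α) F := by
          rw [show (fun i : Fin n =>
            MvPolynomial.aeval r (MvPolynomial.esymm (Fin n) ℂ ((i : ℕ) + 1)))
            = fun i => g i α from funext h1]
  rw [show (fun α => powSum (Matrix.charpoly (C α)).roots j) = _ from funext key]
  exact analyticOnNhd_aeval F g hganal

end charpoly

section interval

lemma exists_good_interval {U : Set ℝ} (hU : IsOpen U) (hsub : Icc (0:ℝ) 1 ⊆ U) :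
    ∃ δ > (0:ℝ), Icc (0:ℝ) 1 ⊆ Ioo (-δ) (1+δ) ∧ Ioo (-δ) (1+δ) ⊆ U := by
  obtain ⟨δ, hδ, hth⟩ := isCompact_Icc.exists_thickening_subset_open hU hsub
  refine ⟨δ, hδ, fun x hx => ⟨by linarith [hx.1], by linarith [hx.2]⟩, fun x hx => ?_⟩
  apply hth
  rw [Metric.mem_thickening_iff]
  obtain ⟨hx1, hx2⟩ := hx
  rcases le_total x 0 with h1 | h1
  · exact ⟨0, ⟨le_refl _, zero_le_one⟩, by rw [Real.dist_eq, abs_lt]; constructor <;> linarith⟩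
  · rcases le_total 1 x with h2 | h2
    · exact ⟨1, ⟨zero_le_one, le_refl _⟩, by rw [Real.dist_eq, abs_lt]; constructor <;> linarith⟩
    · exact ⟨x, ⟨h1, h2⟩, by rw [Real.dist_eq, abs_lt]; constructor <;> linarith⟩

lemma zeros_finite {h : ℝ → ℂ} {I : Set ℝ} (hIc : IsPreconnected I)
    (hh : AnalyticOnNhd ℝ h I) (hsub : Icc (0:ℝ) 1 ⊆ I) {x₀ : ℝ} (hx₀ : x₀ ∈ I)
    (hne : h x₀ ≠ 0) : {x ∈ Icc (0:ℝ) 1 | h x = 0}.Finite := by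
  classical
  have key : ∀ x : ℝ, ∃ V, V ∈ nhds x ∧ (x ∈ Icc (0:ℝ) 1 → ∀ y ∈ V, h y = 0 → y = x) := by
    intro x
    by_cases hx : x ∈ Icc (0:ℝ) 1
    · have hax : AnalyticAt ℝ h x := hh x (hsub hx)
      rcases hax.eventually_eq_zero_or_eventually_ne_zero with hcase | hcase
      · exfalso
        have hfreq : ∃ᶠ y in nhdsWithin x {x}ᶜ, h y = 0 :=
          (hcase.filter_mono nhdsWithin_le_nhds).frequently
        exact hne (hh.eqOn_zero_of_preconnected_of_frequently_eq_zero hIc (hsub hx) hfreq hx₀)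
      · rw [eventually_nhdsWithin_iff] at hcase
        refine ⟨{y | y ∈ ({x}ᶜ : Set ℝ) → h y ≠ 0}, hcase, fun _ y hy hy0 => ?_⟩
        by_contra hne'
        exact hy hne' hy0
    · exact ⟨univ, Filter.univ_mem, fun hc => absurd hc hx⟩
  choose V hV1 hV2 using key
  obtain ⟨T, hTmem, hTcov⟩ := isCompact_Icc.elim_nhds_subcover V (fun x _ => hV1 x)
  apply Set.Finite.subset T.finite_toSet
  intro y hy
  obtain ⟨hy1, hy2⟩ := hy
  have := hTcov hy1
  simp only [Set.mem_iUnion] at this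
  obtain ⟨t, ht, hyt⟩ := this
  have := hV2 t (hTmem t ht) y hyt hy2
  subst this
  exact ht

end interval

def eigenRegion (n : ℕ) (C : ℝ → Matrix (Fin n) (Fin n) ℂ) : Set (ℂ × ℝ) :=
  {p | p.2 ∈ Set.Icc (0 : ℝ) 1 ∧ (Matrix.charpoly (C p.2)).IsRoot p.1}

noncomputable def eigMult (n : ℕ) (C : ℝ → Matrix (Fin n) (Fin n) ℂ) (p : ℂ × ℝ) : ℕ :=
  (Matrix.charpoly (C p.2)).rootMultiplicity p.1

def IsSingularAmbiguity (n : ℕ) (C : ℝ → Matrix (Fin n) (Fin n) ℂ) (p : ℂ × ℝ) : Prop :=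
  p ∈ eigenRegion n C ∧ 2 ≤ eigMult n C p ∧
  ∀ U : Set (ℂ × ℝ), IsOpen U → p ∈ U →
    ∃ q ∈ eigenRegion n C ∩ U, eigMult n C q < eigMult n C p

theorem finitely_many_singular_ambiguities_of_analytic
    (n : ℕ) (hn : 1 ≤ n)
    (C : ℝ → Matrix (Fin n) (Fin n) ℂ)
    (hC : ∃ U : Set ℝ, IsOpen U ∧ Set.Icc (0 : ℝ) 1 ⊆ U ∧
      ∀ i j, AnalyticOnNhd ℝ (fun α => C α i j) U) :
    {p : ℂ × ℝ | IsSingularAmbiguity n C p}.Finite := by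
  classical
  obtain ⟨U, hUo, hUsub, hA⟩ := hC
  obtain ⟨δ, hδ, hIccI, hIU⟩ := exists_good_interval hUo hUsub
  set I : Set ℝ := Ioo (-δ) (1+δ) with hIdef
  have hIpre : IsPreconnected I := isPreconnected_Ioo
  set R : ℝ → Multiset ℂ := fun α => (Matrix.charpoly (C α)).roots with hRdef
  set Nf : ℝ → ℕ := fun α => (R α).toFinset.card with hNfdef
  have hNle : ∀ α, Nf α ≤ n := fun α =>
    le_trans (Multiset.toFinset_card_le _) (le_of_eq (roots_card_eq (C α)))
  -- the generic (maximal) number of distinct eigenvalues over I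
  have h0I : (0:ℝ) ∈ I := ⟨by linarith, by linarith⟩
  have hSne : (Nf '' I).Nonempty := ⟨Nf 0, ⟨0, h0I, rfl⟩⟩
  have hSbdd : BddAbove (Nf '' I) := by
    refine ⟨n, ?_⟩
    rintro m ⟨α, _, rfl⟩
    exact hNle α
  set k := sSup (Nf '' I) with hkdef
  obtain ⟨αs, hαsI, hαsk⟩ := Nat.sSup_mem hSne hSbdd
  have hub : ∀ α ∈ I, Nf α ≤ k := fun α hα => le_csSup hSbdd ⟨α, hα, rfl⟩
  -- the analytic certificate
  set h : ℝ → ℂ := fun α => (hermMat k (R α)).det with hhdef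
  have hanal : AnalyticOnNhd ℝ h I := by
    exact analyticOnNhd_det (fun α => hermMat k (R α))
      (fun a b => (analyticOnNhd_powSum C hA ((a:ℕ)+(b:ℕ))).mono hIU)
  have hαs_ne : h αs ≠ 0 := herm_det_ne_zero _ hαsk
  have hTfin : {x ∈ Icc (0:ℝ) 1 | h x = 0}.Finite :=
    zeros_finite hIpre hanal hIccI hαsI hαs_ne
  -- the singular ambiguities are contained in a finite set
  apply Set.Finite.subset (Set.Finite.biUnion hTfin
    (fun x _ => Set.Finite.prod ((R x).toFinset.finite_toSet) (finite_singleton x)))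
  rintro ⟨z₀, α₀⟩ hq
  obtain ⟨⟨hα₀Icc, hroot⟩, _hmult2, hsing⟩ := hq
  have hmonic := Matrix.charpoly_monic (C α₀)
  have hz₀R : z₀ ∈ R α₀ := Polynomial.mem_roots'.mpr ⟨hmonic.ne_zero, hroot⟩
  suffices hzero : h α₀ = 0 by
    simp only [Set.mem_iUnion]
    exact ⟨α₀, ⟨hα₀Icc, hzero⟩, ⟨by simpa using hz₀R, rfl⟩⟩
  by_contra hα₀ne
  have hα₀I : α₀ ∈ I := hIccI hα₀Icc
  -- a neighborhood of α₀ where h is nonzero and which lies in I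
  have hgood : ∀ᶠ y in nhds α₀, h y ≠ 0 ∧ y ∈ I :=
    ((hanal α₀ hα₀I).continuousAt.eventually_ne hα₀ne).and
      ((isOpen_Ioo (a := -δ) (b := 1+δ)).eventually_mem hα₀I)
  obtain ⟨η, hη, hball⟩ := Metric.eventually_nhds_iff.mp hgood
  have hNα₀ : Nf α₀ = k := by
    refine le_antisymm (hub α₀ hα₀I) ?_
    by_contra hlt
    exact hα₀ne (herm_det_eq_zero _ (not_le.mp hlt))
  -- a sequence of nearby eigenregion points with smaller multiplicity
  have hseq : ∀ j : ℕ, ∃ q' : ℂ × ℝ, q' ∈ eigenRegion n C ∧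
      dist q' (z₀, α₀) < 1/((j:ℝ)+1) ∧ eigMult n C q' < eigMult n C (z₀, α₀) := by
    intro j
    obtain ⟨q', hq'mem, hq'lt⟩ := hsing (Metric.ball (z₀, α₀) (1/((j:ℝ)+1)))
      Metric.isOpen_ball (Metric.mem_ball_self (by positivity))
    exact ⟨q', hq'mem.1, Metric.mem_ball.mp hq'mem.2, hq'lt⟩
  choose Q hQE hQd hQm using hseq
  set αj : ℕ → ℝ := fun j => (Q j).2 with hαjdef
  set zj : ℕ → ℂ := fun j => (Q j).1 with hzjdef
  have hαjIcc : ∀ j, αj j ∈ Icc (0:ℝ) 1 := fun j => (hQE j).1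
  have hdistbound : ∀ j : ℕ, dist (Q j) ((z₀, α₀) : ℂ × ℝ) ≤ 1/((j:ℝ)+1) := fun j => (hQd j).le
  have hαjtend : Filter.Tendsto αj Filter.atTop (nhds α₀) := by
    rw [tendsto_iff_dist_tendsto_zero]
    apply squeeze_zero (fun j => dist_nonneg) (g := fun j : ℕ => 1/((j:ℝ)+1))
      (fun j => le_trans (by
        have := Prod.dist_eq (x := Q j) (y := ((z₀, α₀) : ℂ × ℝ))
        calc dist (αj j) α₀ ≤ dist (Q j) ((z₀, α₀) : ℂ × ℝ) := by
              rw [this]; exact le_max_right _ _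
          _ ≤ _ := le_refl _) (hdistbound j))
      tendsto_one_div_add_atTop_nhds_zero_nat
  have hzjtend : Filter.Tendsto zj Filter.atTop (nhds z₀) := by
    rw [tendsto_iff_dist_tendsto_zero]
    apply squeeze_zero (fun j => dist_nonneg) (g := fun j : ℕ => 1/((j:ℝ)+1))
      (fun j => le_trans (by
        have := Prod.dist_eq (x := Q j) (y := ((z₀, α₀) : ℂ × ℝ))
        calc dist (zj j) z₀ ≤ dist (Q j) ((z₀, α₀) : ℂ × ℝ) := by
              rw [this]; exact le_max_left _ _
          _ ≤ _ := le_refl _) (hdistbound j))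
      tendsto_one_div_add_atTop_nhds_zero_nat
  -- a uniform bound for the roots
  have hBd : ∀ i : ℕ, ∃ Bi : ℝ, ∀ x ∈ Icc (0:ℝ) 1, ‖(Matrix.charpoly (C x)).coeff i‖ ≤ Bi := by
    intro i
    exact isCompact_Icc.exists_bound_of_continuousOn
      ((analyticOnNhd_coeff C hA i).continuousOn.mono hUsub)
  choose Bv hBv using hBd
  set B : ℝ := 1 + ∑ i ∈ Finset.range n, Bv i with hBdef
  have hBvnonneg : ∀ i, 0 ≤ Bv i :=
    fun i => le_trans (norm_nonneg _) (hBv i 0 ⟨le_refl _, zero_le_one⟩)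
  have hB0 : 0 ≤ B := by
    have : 0 ≤ ∑ i ∈ Finset.range n, Bv i := Finset.sum_nonneg fun i _ => hBvnonneg i
    linarith
  have hrootbound : ∀ x ∈ Icc (0:ℝ) 1, ∀ z ∈ R x, ‖z‖ ≤ B := by
    intro x hx z hz
    have h1 := norm_root_le_of_monic (Matrix.charpoly_monic (C x))
      (by rw [charpoly_natdeg]; exact hn) (Polynomial.isRoot_of_mem_roots hz)
    rw [charpoly_natdeg] at h1
    refine le_trans h1 ?_
    rw [hBdef]
    have : ∑ i ∈ Finset.range n, ‖(Matrix.charpoly (C x)).coeff i‖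
        ≤ ∑ i ∈ Finset.range n, Bv i :=
      Finset.sum_le_sum fun i _ => hBv i x hx
    linarith
  -- root tuples
  have hex : ∀ j, ∃ r : Fin n → ℂ, Multiset.map r Finset.univ.val = R (αj j) :=
    fun j => exists_tuple _ (roots_card_eq _)
  choose rj hrj using hex
  have hrjmem : ∀ j, rj j ∈ Metric.closedBall (0 : Fin n → ℂ) B := by
    intro j
    rw [Metric.mem_closedBall, dist_zero_right]
    rw [pi_norm_le_iff_of_nonneg hB0]
    intro i
    apply hrootbound (αj j) (hαjIcc j)
    rw [← hrj j]
    exact Multiset.mem_map_of_mem _ (Finset.mem_val.mpr (Finset.mem_univ i))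
  obtain ⟨rstar, _hrstarcl, φ, hφmono, hφtend⟩ :=
    tendsto_subseq_of_bounded Metric.isBounded_closedBall hrjmem
  -- the limit of the root tuples is a root tuple for α₀
  have hcoefftend : ∀ t : ℕ, Filter.Tendsto (fun l => (Matrix.charpoly (C (αj (φ l)))).coeff t)
      Filter.atTop (nhds ((Matrix.charpoly (C α₀)).coeff t)) := fun t =>
    (((analyticOnNhd_coeff C hA t) α₀ (hUsub hα₀Icc)).continuousAt.tendsto).comp
      (hαjtend.comp hφmono.tendsto_atTop)
  have hcomp : ∀ i : Fin n, Filter.Tendsto (fun l => rj (φ l) i) Filter.atTop (nhds (rstar i)) :=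
    fun i => ((continuous_apply i).tendsto rstar).comp hφtend
  have hQrepr : ∀ x : ℝ, Matrix.charpoly (C x)
      = (Multiset.map (fun z => X - Polynomial.C z) (R x)).prod := fun x =>
    (IsAlgClosed.splits _).eq_prod_roots_of_monic (Matrix.charpoly_monic (C x))
  set fQ : (Fin n → ℂ) → Polynomial ℂ := fun r =>
    (Multiset.map (fun z => X - Polynomial.C z) (Multiset.map r Finset.univ.val)).prod with hfQdef
  have hfQdeg : ∀ r : Fin n → ℂ, (fQ r).natDegree = n := by
    intro r
    rw [hfQdef]
    rw [Polynomial.natDegree_multiset_prod_X_sub_C_eq_card]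
    simp
  have hlim : Matrix.charpoly (C α₀) = fQ rstar := by
    ext t
    rcases le_or_gt t n with ht | ht
    · -- coefficients converge
      have hcont : Continuous (fun r : Fin n → ℂ => (fQ r).coeff t) := by
        have hre : (fun r : Fin n → ℂ => (fQ r).coeff t)
            = fun r => (-1 : ℂ) ^ (n - t) * ∑ s ∈ Finset.univ.powersetCard (n - t), ∏ i ∈ s, r i := by
          funext r
          have hcard : Multiset.card (Multiset.map r Finset.univ.val) = n := by simp
          have hco := Multiset.prod_X_sub_C_coeff (Multiset.map r Finset.univ.val)
            (show t ≤ Multiset.card (Multiset.map r Finset.univ.val) by rw [hcard]; exact ht)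
          rw [hcard] at hco
          rw [hfQdef]
          simp only []
          rw [hco, Finset.esymm_map_val]
        rw [hre]
        exact continuous_const.mul (continuous_finset_sum _ fun s _ =>
          continuous_finset_prod _ fun i _ => continuous_apply i)
      have h2 : Filter.Tendsto (fun l => (Matrix.charpoly (C (αj (φ l)))).coeff t)
          Filter.atTop (nhds ((fQ rstar).coeff t)) := by
        have heq : (fun l => (Matrix.charpoly (C (αj (φ l)))).coeff t)
            = fun l => (fQ (rj (φ l))).coeff t := by
          funext l
          rw [hQrepr (αj (φ l)), ← hrj (φ l)]
        rw [heq]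
        exact (hcont.tendsto rstar).comp hφtend
      exact tendsto_nhds_unique (hcoefftend t) h2
    · rw [Polynomial.coeff_eq_zero_of_natDegree_lt (by rw [charpoly_natdeg]; exact ht),
        Polynomial.coeff_eq_zero_of_natDegree_lt (by rw [hfQdeg]; exact ht)]
  have hRα₀ : R α₀ = Multiset.map rstar Finset.univ.val := by
    show (Matrix.charpoly (C α₀)).roots = _
    rw [hlim]
    exact Polynomial.roots_multiset_prod_X_sub_C (Multiset.map rstar Finset.univ.val)
  -- the separation radius
  set T0 : Finset ℂ := (R α₀).toFinset with hT0def
  have hT0card : T0.card = k := hNα₀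
  have hz₀T0 : z₀ ∈ T0 := Multiset.mem_toFinset.mpr hz₀R
  obtain ⟨ε, hε0, hεsep⟩ : ∃ ε > (0:ℝ), ∀ v ∈ T0, ∀ w ∈ T0, v ≠ w → 3*ε ≤ dist v w := by
    set D : Finset ℝ := T0.offDiag.image (fun pr => dist pr.1 pr.2) with hDdef
    by_cases hD : D.Nonempty
    · refine ⟨D.min' hD / 3, ?_, ?_⟩
      · obtain ⟨pr, hpr, hprd⟩ := Finset.mem_image.mp (D.min'_mem hD)
        obtain ⟨_, _, hne⟩ := Finset.mem_offDiag.mp hpr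
        have : 0 < dist pr.1 pr.2 := dist_pos.mpr hne
        rw [hprd] at this
        linarith
      · intro v hv w hw hne
        have hmem : dist v w ∈ D := Finset.mem_image.mpr
          ⟨(v, w), Finset.mem_offDiag.mpr ⟨hv, hw, hne⟩, rfl⟩
        have := D.min'_le _ hmem
        linarith
    · refine ⟨1, one_pos, fun v hv w hw hne => absurd ?_ hD⟩
      exact ⟨dist v w, Finset.mem_image.mpr ⟨(v, w), Finset.mem_offDiag.mpr ⟨hv, hw, hne⟩, rfl⟩⟩
  have huniq : ∀ (z v w : ℂ), v ∈ T0 → w ∈ T0 → dist v z < ε → dist w z < ε → v = w := by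
    intro z v w hv hw h1 h2
    by_contra hne
    have h3 := hεsep v hv w hw hne
    have h4 : dist v w ≤ dist v z + dist z w := dist_triangle _ _ _
    rw [dist_comm z w] at h4
    linarith
  -- choose a good index
  have hev1 : ∀ᶠ l in Filter.atTop, dist (rj (φ l)) rstar < ε := by
    have := hφtend (Metric.ball_mem_nhds rstar hε0)
    simpa [Metric.mem_ball] using this
  have hev2 : ∀ᶠ l in Filter.atTop, dist (αj (φ l)) α₀ < η := by
    have := (hαjtend.comp hφmono.tendsto_atTop) (Metric.ball_mem_nhds α₀ hη)
    simpa [Metric.mem_ball] using this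
  have hev3 : ∀ᶠ l in Filter.atTop, dist (zj (φ l)) z₀ < ε := by
    have := (hzjtend.comp hφmono.tendsto_atTop) (Metric.ball_mem_nhds z₀ hε0)
    simpa [Metric.mem_ball] using this
  obtain ⟨l, ⟨h1, h2⟩, h3⟩ := ((hev1.and hev2).and hev3).exists
  -- notation for the chosen index
  set j0 : ℕ := φ l with hj0def
  set α' : ℝ := αj j0 with hα'def
  set z' : ℂ := zj j0 with hz'def
  set r' : Fin n → ℂ := rj j0 with hr'def
  have hclose : ∀ i : Fin n, dist (r' i) (rstar i) < ε :=
    fun i => lt_of_le_of_lt (dist_le_pi_dist (r' ) rstar i) h1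
  have hα'I : α' ∈ I := (hball h2).2
  have hα'ne : h α' ≠ 0 := (hball h2).1
  have hNα' : Nf α' = k := by
    refine le_antisymm (hub α' hα'I) ?_
    by_contra hlt
    exact hα'ne (herm_det_eq_zero _ (not_le.mp hlt))
  set T' : Finset ℂ := (R α').toFinset with hT'def
  have hT'card : T'.card = k := hNα'
  have hs' : Multiset.map r' Finset.univ.val = R α' := hrj j0
  have hrmemT' : ∀ i : Fin n, r' i ∈ T' := by
    intro i
    apply Multiset.mem_toFinset.mpr
    rw [← hs']
    exact Multiset.mem_map_of_mem _ (Finset.mem_val.mpr (Finset.mem_univ i))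
  have hrmemT0 : ∀ i : Fin n, rstar i ∈ T0 := by
    intro i
    apply Multiset.mem_toFinset.mpr
    rw [hRα₀]
    exact Multiset.mem_map_of_mem _ (Finset.mem_val.mpr (Finset.mem_univ i))
  have hz'root : (Matrix.charpoly (C α')).IsRoot z' := (hQE j0).2
  have hz'T' : z' ∈ T' := Multiset.mem_toFinset.mpr
    (Polynomial.mem_roots'.mpr ⟨(Matrix.charpoly_monic (C α')).ne_zero, hz'root⟩)
  -- the matching bijection between T' and T0
  have hFex : ∀ v : {x // x ∈ T'}, ∃ w, w ∈ T0 ∧ dist (v : ℂ) w < ε := by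
    rintro ⟨v, hv⟩
    have hv' : v ∈ Multiset.map r' Finset.univ.val := by
      rw [hs']; exact Multiset.mem_toFinset.mp hv
    obtain ⟨i, _, hi⟩ := Multiset.mem_map.mp hv'
    refine ⟨rstar i, hrmemT0 i, ?_⟩
    have hcl := hclose i
    rw [hi] at hcl
    exact hcl
  set F : {x // x ∈ T'} → {x // x ∈ T0} :=
    fun v => ⟨(hFex v).choose, (hFex v).choose_spec.1⟩ with hFdef
  have hFdist : ∀ v : {x // x ∈ T'}, dist (v : ℂ) ((F v : ℂ)) < ε :=
    fun v => (hFex v).choose_spec.2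
  have hFeq : ∀ (v : {x // x ∈ T'}) (w : ℂ), w ∈ T0 → dist (v : ℂ) w < ε → (F v : ℂ) = w := by
    intro v w hw hd
    exact huniq (v : ℂ) _ _ (F v).2 hw (by rw [dist_comm]; exact hFdist v)
      (by rw [dist_comm]; exact hd)
  have hFsurj : Function.Surjective F := by
    rintro ⟨w, hw⟩
    have hw' : w ∈ R α₀ := Multiset.mem_toFinset.mp hw
    rw [hRα₀] at hw'
    obtain ⟨i, _, hi⟩ := Multiset.mem_map.mp hw'
    refine ⟨⟨r' i, hrmemT' i⟩, Subtype.ext ?_⟩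
    exact hFeq _ w hw (by rw [← hi]; exact hclose i)
  have hFinj : Function.Injective F := by
    have hcards : Fintype.card {x // x ∈ T'} = Fintype.card {x // x ∈ T0} := by
      rw [Fintype.card_coe, Fintype.card_coe, hT'card, hT0card]
    exact ((Fintype.bijective_iff_surjective_and_card F).mpr ⟨hFsurj, hcards⟩).1
  -- multiplicities agree, contradiction
  have hiff : ∀ i : Fin n, (z' = r' i ↔ z₀ = rstar i) := by
    intro i
    constructor
    · intro hEq
      refine huniq (r' i) z₀ (rstar i) hz₀T0 (hrmemT0 i) ?_ ?_
      · rw [dist_comm, ← hEq]; exact h3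
      · rw [dist_comm]; exact hclose i
    · intro hEq
      have e1 : (F ⟨z', hz'T'⟩ : ℂ) = z₀ := hFeq _ _ hz₀T0 h3
      have e2 : (F ⟨r' i, hrmemT' i⟩ : ℂ) = z₀ :=
        hFeq _ _ hz₀T0 (by rw [hEq]; exact hclose i)
      have := hFinj (Subtype.ext (e1.trans e2.symm))
      exact Subtype.ext_iff.mp this
  have hcnt : Multiset.count z' (R α') = Multiset.count z₀ (R α₀) := by
    rw [← hs', hRα₀, Multiset.count_map, Multiset.count_map]
    congr 1
    exact Multiset.filter_congr (fun i _ => hiff i)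
  have hlt := hQm j0
  have hc1 : eigMult n C (Q j0) = Multiset.count z' (R α') :=
    (Polynomial.count_roots _).symm
  have hc2 : eigMult n C ((z₀, α₀) : ℂ × ℝ) = Multiset.count z₀ (R α₀) :=
    (Polynomial.count_roots _).symm
  rw [hc1, hc2, hcnt] at hlt
  exact lt_irrefl _ hlt
end
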